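/- For s < 0 and the function f_s(x,y) = arg((x,y) − (s,s)) (angle of the vector (x−s, y−s)) on T = {(x,y) ∈ [0,L]² : y ≥ x}, the map F = (F_{s_i})_{i=1}^{n+1} : D_n ∩ [0,L]² → ℝ^{n(n+1)} is injective and continuous (hence a topological embedding by compactness), where each F_{s_i}(p) lists the f_{s_i}-values of the n points of the diagram p in nondecreasing order, and s_1,...,s_{n+1} are pairwise distinct negative reals. -/

import Mathlib

open scoped BigOperators

/-- The space of persistence diagrams on one point: `T ∪ {Δ}`, where
`T = {(x₁,x₂) : x₂ > x₁ ≥ 0}` and `none` plays the role of the diagonal `Δ`. -/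
abbrev D1 : Type := Option {p : ℝ × ℝ // 0 ≤ p.1 ∧ p.1 < p.2}

/-- The bottleneck distance on `D1`. -/
noncomputable def dB : D1 → D1 → ℝ
  | none, none => 0
  | none, some p => (p.1.2 - p.1.1) / 2
  | some p, none => (p.1.2 - p.1.1) / 2
  | some p, some q =>
      min (max |p.1.1 - q.1.1| |p.1.2 - q.1.2|)
        (max ((p.1.2 - p.1.1) / 2) ((q.1.2 - q.1.1) / 2))

/-- max over coordinates. -/
noncomputable def dBmax {N : ℕ} (x y : Fin N → D1) : ℝ :=
  Finset.univ.fold max 0 (fun i => dB (x i) (y i))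

/-- bottleneck distance on tuples, min over permutations. -/
noncomputable def dBn {N : ℕ} (x y : Fin N → D1) : ℝ :=
  Finset.univ.inf' Finset.univ_nonempty
    (fun ψ : Equiv.Perm (Fin N) => dBmax x (y ∘ ψ))

def RGplus (R : ℝ) : Set D1 :=
  insert none {d : D1 | ∃ p, d = some p ∧ ∃ m k : ℕ,
    Odd m ∧ 1 ≤ m ∧ Even k ∧ 4 ≤ k ∧ m + 3 ≤ k ∧ p.1 = ((m : ℝ) * R, (k : ℝ) * R)}

def inBox (L : ℝ) : D1 → Prop
  | none => True
  | some p => p.1.1 ∈ Set.Icc 0 L ∧ p.1.2 ∈ Set.Icc 0 L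

/-- The angle of a diagram point with respect to `(s,s)`, `s < 0`; the
diagonal `Δ` gets the angle `π/4`. -/
noncomputable def fAngle (s : ℝ) : D1 → ℝ
  | none => Real.pi / 4
  | some p => Real.arctan ((p.1.2 - s) / (p.1.1 - s))

/-- The `f_s`-values of the points of a diagram, listed in nondecreasing order. -/
noncomputable def sortedVals {N : ℕ} (s : ℝ) (x : Fin N → D1) : Fin N → ℝ :=
  (fAngle s ∘ x) ∘ Tuple.sort (fAngle s ∘ x)

/-! ### Auxiliary lemmas -/

lemma arctan_lipschitz (u v : ℝ) : |Real.arctan u - Real.arctan v| ≤ |u - v| := by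
  have h := Convex.norm_image_sub_le_of_norm_deriv_le
    (f := Real.arctan) (s := Set.univ) (C := 1)
    (fun x _ => Real.differentiableAt_arctan x)
    (fun x _ => by
      rw [Real.deriv_arctan]
      have h1 : (0:ℝ) < 1 + x ^ 2 := by positivity
      rw [Real.norm_eq_abs, abs_of_pos (by positivity), div_le_one h1]
      nlinarith [sq_nonneg x])
    convex_univ (Set.mem_univ v) (Set.mem_univ u)
  simpa using h

lemma quarter_bound {s a b : ℝ} (hs : s < 0) (ha : 0 ≤ a) (hab : a < b) :
    Real.pi / 4 ≤ Real.arctan ((b - s) / (a - s)) ∧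
      Real.arctan ((b - s) / (a - s)) - Real.pi / 4 ≤ (b - a) / (-s) := by
  have has : 0 < a - s := by linarith
  have hns : (0:ℝ) < -s := by linarith
  have h1 : (1:ℝ) ≤ (b - s) / (a - s) := by
    rw [le_div_iff₀ has]; linarith
  constructor
  · rw [← Real.arctan_one]
    exact Real.arctan_strictMono.monotone h1
  · have h2 := arctan_lipschitz ((b - s) / (a - s)) 1
    rw [Real.arctan_one] at h2
    have h3 : (b - s) / (a - s) - 1 = (b - a) / (a - s) := by
      field_simp; ring
    have h4 : |(b - s) / (a - s) - 1| = (b - a) / (a - s) := by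
      rw [h3, abs_of_nonneg (div_nonneg (by linarith) has.le)]
    have h5 : (b - a) / (a - s) ≤ (b - a) / (-s) := by
      rw [div_le_div_iff₀ has hns]
      nlinarith
    have h6 := le_trans (le_abs_self _) h2
    rw [h4] at h6
    linarith

lemma dB_nonneg (u v : D1) : 0 ≤ dB u v := by
  match u, v with
  | none, none => simp [dB]
  | none, some p =>
      have := p.2.2; simp only [dB]; linarith
  | some p, none =>
      have := p.2.2; simp only [dB]; linarith
  | some p, some q =>
      refine le_min (le_trans (abs_nonneg _) (le_max_left _ _))
        (le_trans ?_ (le_max_left _ _))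
      have := p.2.2; linarith

set_option maxHeartbeats 1000000 in
lemma angle_dB (L s : ℝ) (hs : s < 0) (u v : D1)
    (hu : inBox L u) (hv : inBox L v) :
    |fAngle s u - fAngle s v| ≤ max (2 * (L - s) / s ^ 2) (4 / (-s)) * dB u v := by
  have hns : (0:ℝ) < -s := by linarith
  have hs0 : s ≠ 0 := ne_of_lt hs
  have hs2 : (0:ℝ) < s ^ 2 := by nlinarith
  have hC2 : (0:ℝ) < 4 / (-s) := by positivity
  have hC : (0:ℝ) ≤ max (2 * (L - s) / s ^ 2) (4 / (-s)) :=
    le_trans hC2.le (le_max_right _ _)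
  match u, v with
  | none, none => simp [fAngle, dB]
  | none, some p =>
      obtain ⟨⟨ha0, haL⟩, hb0, hbL⟩ := hv
      have hab := p.2.2
      have ha := p.2.1
      have q := quarter_bound (a := p.1.1) (b := p.1.2) hs ha hab
      have hgap : (0:ℝ) ≤ (p.1.2 - p.1.1) / 2 := by linarith
      have e : (4 / (-s)) * ((p.1.2 - p.1.1) / 2) = 2 * ((p.1.2 - p.1.1) / (-s)) := by
        field_simp; ring
      have hdn : (0:ℝ) ≤ (p.1.2 - p.1.1) / (-s) := div_nonneg (by linarith) hns.le
      have h7 : (4 / (-s)) * ((p.1.2 - p.1.1) / 2)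
          ≤ max (2 * (L - s) / s ^ 2) (4 / (-s)) * ((p.1.2 - p.1.1) / 2) :=
        mul_le_mul_of_nonneg_right (le_max_right _ _) hgap
      simp only [fAngle, dB]
      rw [abs_sub_comm, abs_of_nonneg (by linarith [q.1])]
      linarith [q.2]
  | some p, none =>
      obtain ⟨⟨ha0, haL⟩, hb0, hbL⟩ := hu
      have hab := p.2.2
      have ha := p.2.1
      have q := quarter_bound (a := p.1.1) (b := p.1.2) hs ha hab
      have hgap : (0:ℝ) ≤ (p.1.2 - p.1.1) / 2 := by linarith
      have e : (4 / (-s)) * ((p.1.2 - p.1.1) / 2) = 2 * ((p.1.2 - p.1.1) / (-s)) := by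
        field_simp; ring
      have hdn : (0:ℝ) ≤ (p.1.2 - p.1.1) / (-s) := div_nonneg (by linarith) hns.le
      have h7 : (4 / (-s)) * ((p.1.2 - p.1.1) / 2)
          ≤ max (2 * (L - s) / s ^ 2) (4 / (-s)) * ((p.1.2 - p.1.1) / 2) :=
        mul_le_mul_of_nonneg_right (le_max_right _ _) hgap
      simp only [fAngle, dB]
      rw [abs_of_nonneg (by linarith [q.1])]
      linarith [q.2]
  | some p, some q =>
      obtain ⟨⟨ha0, haL⟩, hb0, hbL⟩ := hu
      obtain ⟨⟨hc0, hcL⟩, hd0, hdL⟩ := hv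
      have hab := p.2.2
      have hcd := q.2.2
      set a := p.1.1 with hadef
      set b := p.1.2 with hbdef
      set c := q.1.1 with hcdef
      set d := q.1.2 with hddef
      have has : (0:ℝ) < a - s := by linarith
      have hcs : (0:ℝ) < c - s := by linarith
      set A := max |a - c| |b - d| with hAdef
      set B := max ((b - a) / 2) ((d - c) / 2) with hBdef
      have hA0 : (0:ℝ) ≤ A := le_trans (abs_nonneg _) (le_max_left _ _)
      have hB0 : (0:ℝ) ≤ B := le_trans (by linarith : (0:ℝ) ≤ (b - a)/2) (le_max_left _ _)
      -- first bound, via coordinates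
      have bound1 : |Real.arctan ((b - s) / (a - s)) - Real.arctan ((d - s) / (c - s))|
          ≤ (2 * (L - s) / s ^ 2) * A := by
        have lip := arctan_lipschitz ((b - s) / (a - s)) ((d - s) / (c - s))
        have hdiff : (b - s) / (a - s) - (d - s) / (c - s)
            = ((b - s) * (c - s) - (a - s) * (d - s)) / ((a - s) * (c - s)) := by
          rw [div_sub_div _ _ has.ne' hcs.ne']
        have hnum : |(b - s) * (c - s) - (a - s) * (d - s)| ≤ 2 * (L - s) * A := by
          have h1 : (b - s) * (c - s) - (a - s) * (d - s)
              = (c - s) * (b - d) + (d - s) * (c - a) := by ring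
          have hbd : |b - d| ≤ A := le_max_right _ _
          have hca : |c - a| ≤ A := by rw [abs_sub_comm]; exact le_max_left _ _
          calc |(b - s) * (c - s) - (a - s) * (d - s)|
              = |(c - s) * (b - d) + (d - s) * (c - a)| := by rw [h1]
            _ ≤ |(c - s) * (b - d)| + |(d - s) * (c - a)| := abs_add_le _ _
            _ = (c - s) * |b - d| + (d - s) * |c - a| := by
                rw [abs_mul, abs_mul, abs_of_pos hcs, abs_of_pos (by linarith : (0:ℝ) < d - s)]
            _ ≤ (L - s) * A + (L - s) * A := by
                gcongr <;> linarith
            _ = 2 * (L - s) * A := by ring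
        have hden : s ^ 2 ≤ (a - s) * (c - s) := by nlinarith
        have habs : |(b - s) / (a - s) - (d - s) / (c - s)|
            = |(b - s) * (c - s) - (a - s) * (d - s)| / ((a - s) * (c - s)) := by
          rw [hdiff, abs_div, abs_of_pos (mul_pos has hcs)]
        have hfrac : |(b - s) * (c - s) - (a - s) * (d - s)| / ((a - s) * (c - s))
            ≤ (2 * (L - s) * A) / s ^ 2 :=
          div_le_div₀ (mul_nonneg (by nlinarith : (0:ℝ) ≤ 2 * (L - s)) hA0) hnum hs2 hden
        have e2 : (2 * (L - s) * A) / s ^ 2 = (2 * (L - s) / s ^ 2) * A := by ring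
        calc |Real.arctan ((b - s) / (a - s)) - Real.arctan ((d - s) / (c - s))|
            ≤ |(b - s) / (a - s) - (d - s) / (c - s)| := lip
          _ = _ := habs
          _ ≤ (2 * (L - s) * A) / s ^ 2 := hfrac
          _ = (2 * (L - s) / s ^ 2) * A := e2
      -- second bound, via diagonal
      have bound2 : |Real.arctan ((b - s) / (a - s)) - Real.arctan ((d - s) / (c - s))|
          ≤ (4 / (-s)) * B := by
        have q1 := quarter_bound (a := a) (b := b) hs ha0 hab
        have q2 := quarter_bound (a := c) (b := d) hs hc0 hcd
        have e1 : (4 / (-s)) * ((b - a) / 2) = 2 * ((b - a) / (-s)) := by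
          field_simp; ring
        have e2 : (4 / (-s)) * ((d - c) / 2) = 2 * ((d - c) / (-s)) := by
          field_simp; ring
        have hd1 : (0:ℝ) ≤ (b - a) / (-s) := div_nonneg (by linarith) hns.le
        have hd2 : (0:ℝ) ≤ (d - c) / (-s) := div_nonneg (by linarith) hns.le
        have hB1 : (b - a) / (-s) ≤ (4 / (-s)) * B := by
          have := mul_le_mul_of_nonneg_left (le_max_left ((b - a)/2) ((d - c)/2)) hC2.le
          linarith
        have hB2 : (d - c) / (-s) ≤ (4 / (-s)) * B := by
          have := mul_le_mul_of_nonneg_left (le_max_right ((b - a)/2) ((d - c)/2)) hC2.le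
          linarith
        rw [abs_sub_le_iff]
        refine ⟨?_, ?_⟩
        · linarith [q1.1, q1.2, q2.1, q2.2]
        · linarith [q1.1, q1.2, q2.1, q2.2]
      rcases le_total A B with h | h
      · simp only [fAngle, dB]
        rw [min_eq_left h]
        calc |Real.arctan ((b - s) / (a - s)) - Real.arctan ((d - s) / (c - s))|
            ≤ (2 * (L - s) / s ^ 2) * A := bound1
          _ ≤ max (2 * (L - s) / s ^ 2) (4 / (-s)) * A :=
              mul_le_mul_of_nonneg_right (le_max_left _ _) hA0
      · simp only [fAngle, dB]
        rw [min_eq_right h]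
        calc |Real.arctan ((b - s) / (a - s)) - Real.arctan ((d - s) / (c - s))|
            ≤ (4 / (-s)) * B := bound2
          _ ≤ max (2 * (L - s) / s ^ 2) (4 / (-s)) * B :=
              mul_le_mul_of_nonneg_right (le_max_right _ _) hB0

lemma angle_forces {s t : ℝ} (hs : s < 0) (ht : t < 0) (hst : s ≠ t) (u v : D1)
    (h1 : fAngle s u = fAngle s v) (h2 : fAngle t u = fAngle t v) : u = v := by
  have quarter_lt : ∀ (w : ℝ) (hw : w < 0) (p : {p : ℝ × ℝ // 0 ≤ p.1 ∧ p.1 < p.2}),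
      Real.pi / 4 < Real.arctan ((p.1.2 - w) / (p.1.1 - w)) := by
    intro w hw p
    have has : (0:ℝ) < p.1.1 - w := by linarith [p.2.1]
    have hr : (1:ℝ) < (p.1.2 - w) / (p.1.1 - w) := by
      rw [lt_div_iff₀ has]; linarith [p.2.2]
    rw [← Real.arctan_one]
    exact Real.arctan_strictMono hr
  match u, v with
  | none, none => rfl
  | none, some p =>
      exfalso
      simp only [fAngle] at h1
      exact absurd h1 (ne_of_lt (quarter_lt s hs p))
  | some p, none =>
      exfalso
      simp only [fAngle] at h1
      exact absurd h1.symm (ne_of_lt (quarter_lt s hs p))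
  | some p, some q =>
      simp only [fAngle] at h1 h2
      have has : (0:ℝ) < p.1.1 - s := by linarith [p.2.1]
      have hcs : (0:ℝ) < q.1.1 - s := by linarith [q.2.1]
      have hat : (0:ℝ) < p.1.1 - t := by linarith [p.2.1]
      have hct : (0:ℝ) < q.1.1 - t := by linarith [q.2.1]
      set a := p.1.1
      set b := p.1.2
      set c := q.1.1
      set d := q.1.2
      have e1 : (b - s) * (c - s) = (d - s) * (a - s) := by
        have := Real.arctan_injective h1
        rwa [div_eq_div_iff has.ne' hcs.ne'] at this
      have e2 : (b - t) * (c - t) = (d - t) * (a - t) := by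
        have := Real.arctan_injective h2
        rwa [div_eq_div_iff hat.ne' hct.ne'] at this
      have h3 : (t - s) * ((b + c) - (a + d)) = 0 := by linear_combination e1 - e2
      have hts : t - s ≠ 0 := sub_ne_zero.mpr (Ne.symm hst)
      have hsum : b + c = a + d := by
        rcases mul_eq_zero.mp h3 with h | h
        · exact absurd h hts
        · linarith
      have hprod : b * c = a * d := by linear_combination e1 + s * hsum
      have hac : (b - a) * (a - c) = 0 := by linear_combination a * hsum - hprod
      have hba : b - a ≠ 0 := sub_ne_zero.mpr (ne_of_gt p.2.2)
      have haceq : a = c := by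
        rcases mul_eq_zero.mp hac with h | h
        · exact absurd h hba
        · linarith
      have hbdeq : b = d := by linarith
      congr 1
      exact Subtype.ext (Prod.ext_iff.mpr ⟨haceq, hbdeq⟩)

lemma sorted_le {N : ℕ} (a b : Fin N → ℝ) (ψ : Equiv.Perm (Fin N)) (c : ℝ)
    (h : ∀ j, a j ≤ b (ψ j) + c) (k : Fin N) :
    a (Tuple.sort a k) ≤ b (Tuple.sort b k) + c := by
  classical
  set t := b (Tuple.sort b k) with ht
  have hk : (k : ℕ) < Fintype.card {i // (b ∘ Tuple.sort b) i ≤ t} :=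
    by rw [Fintype.card_subtype]; exact (Tuple.lt_card_le_iff_apply_le_of_monotone (f := b ∘ Tuple.sort b) (a := t)
      (Tuple.monotone_sort b) (j := k)).mpr le_rfl
  have e1 : Fintype.card {i // (b ∘ Tuple.sort b) i ≤ t} = Fintype.card {i // b i ≤ t} :=
    Fintype.card_congr ((Tuple.sort b).subtypeEquiv fun i => Iff.rfl)
  have e2 : Fintype.card {i // b i ≤ t} ≤ Fintype.card {i // a i ≤ t + c} := by
    refine Fintype.card_le_of_injective (fun w => ⟨ψ.symm w.1, ?_⟩) ?_
    · have h1 := h (ψ.symm w.1)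
      rw [Equiv.apply_symm_apply] at h1
      have := w.2
      linarith
    · intro w w' hw
      exact Subtype.ext (ψ.symm.injective (congrArg Subtype.val hw))
  have e3 : Fintype.card {i // a i ≤ t + c}
      = Fintype.card {i // (a ∘ Tuple.sort a) i ≤ t + c} :=
    (Fintype.card_congr ((Tuple.sort a).subtypeEquiv fun i => Iff.rfl)).symm
  rw [e1] at hk
  have hk2 := lt_of_lt_of_le hk e2
  rw [e3] at hk2
  rw [Fintype.card_subtype] at hk2
  exact (Tuple.lt_card_le_iff_apply_le_of_monotone (f := a ∘ Tuple.sort a) (a := t + c)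
    (Tuple.monotone_sort a) (j := k)).mp hk2

lemma sorted_abs_le {N : ℕ} (a b : Fin N → ℝ) (ψ : Equiv.Perm (Fin N)) (c : ℝ)
    (h : ∀ j, |a j - b (ψ j)| ≤ c) (k : Fin N) :
    |a (Tuple.sort a k) - b (Tuple.sort b k)| ≤ c := by
  rw [abs_sub_le_iff]
  constructor
  · have := sorted_le a b ψ c (fun j => by have := abs_le.mp (h j); linarith [this.1, this.2]) k
    linarith
  · have := sorted_le b a ψ.symm c (fun j => by
      have h2 := h (ψ.symm j)
      rw [Equiv.apply_symm_apply] at h2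
      have := abs_le.mp h2
      linarith [this.1]) k
    linarith

lemma card_filter_comp_perm {N : ℕ} (g : Fin N → ℝ) (σ : Equiv.Perm (Fin N)) (t : ℝ)
    [DecidablePred fun j => g (σ j) = t] [DecidablePred fun j => g j = t] :
    (Finset.univ.filter fun j => g (σ j) = t).card
      = (Finset.univ.filter fun j => g j = t).card := by
  classical
  rw [← Fintype.card_subtype, ← Fintype.card_subtype]
  exact Fintype.card_congr (σ.subtypeEquiv fun j => Iff.rfl)

/-- For pairwise distinct negative reals `s₁,…,s_{n+1}`, the map
`F = (F_{sᵢ})ᵢ : D_n ∩ [0,L]² → ℝ^{n(n+1)}` recording the sorted `f_{sᵢ}`-values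
is injective and continuous. -/
theorem angle_map_injective_continuous {N : ℕ} (L : ℝ) (hL : 0 < L)
    (s : Fin (N + 1) → ℝ) (hs : Function.Injective s) (hneg : ∀ i, s i < 0) :
    (∀ x y : Fin N → D1, (∀ i, inBox L (x i)) → (∀ i, inBox L (y i)) →
      (∀ (i : Fin (N + 1)) (j : Fin N), sortedVals (s i) x j = sortedVals (s i) y j) →
      ∃ ψ : Equiv.Perm (Fin N), x = y ∘ ψ) ∧
    (∀ x : Fin N → D1, (∀ i, inBox L (x i)) → ∀ ε > 0, ∃ δ > 0,
      ∀ y : Fin N → D1, (∀ i, inBox L (y i)) → dBn x y < δ →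
      ∀ (i : Fin (N + 1)) (j : Fin N),
        |sortedVals (s i) x j - sortedVals (s i) y j| < ε) := by
  classical
  constructor
  · -- injectivity
    intro x y hx hy h
    -- angle-value counts agree
    have hang : ∀ (i : Fin (N + 1)) (t : ℝ),
        (Finset.univ.filter fun j => fAngle (s i) (x j) = t).card
          = (Finset.univ.filter fun j => fAngle (s i) (y j) = t).card := by
      intro i t
      have hx1 : (Finset.univ.filter fun j => sortedVals (s i) x j = t).card
          = (Finset.univ.filter fun j => fAngle (s i) (x j) = t).card :=
        card_filter_comp_perm (fAngle (s i) ∘ x) (Tuple.sort (fAngle (s i) ∘ x)) t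
      have hy1 : (Finset.univ.filter fun j => sortedVals (s i) y j = t).card
          = (Finset.univ.filter fun j => fAngle (s i) (y j) = t).card :=
        card_filter_comp_perm (fAngle (s i) ∘ y) (Tuple.sort (fAngle (s i) ∘ y)) t
      have hmid : (Finset.univ.filter fun j => sortedVals (s i) x j = t).card
          = (Finset.univ.filter fun j => sortedVals (s i) y j = t).card := by
        congr 1
        apply Finset.filter_congr
        intro j _
        rw [h i j]
      rw [← hx1, hmid, hy1]
    -- point counts agree
    have hcnt : ∀ v : D1,
        (Finset.univ.filter fun j => x j = v).card
          = (Finset.univ.filter fun j => y j = v).card := by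
      intro v
      have hA : ∀ (z : Fin N → D1) (i : Fin (N + 1)),
          (Finset.univ.filter fun j => z j = v).card
            ≤ (Finset.univ.filter fun j => fAngle (s i) (z j) = fAngle (s i) v).card := by
        intro z i
        apply Finset.card_le_card
        intro j hj
        simp only [Finset.mem_filter, Finset.mem_univ, true_and] at hj ⊢
        rw [hj]
      have hB : ∀ z : Fin N → D1, ∃ i : Fin (N + 1),
          (Finset.univ.filter fun j => fAngle (s i) (z j) = fAngle (s i) v).card
            ≤ (Finset.univ.filter fun j => z j = v).card := by
        intro z
        by_contra hc
        push_neg at hc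
        have hex : ∀ i : Fin (N + 1), ∃ j,
            fAngle (s i) (z j) = fAngle (s i) v ∧ z j ≠ v := by
          intro i
          have hlt := hc i
          have hsub : (Finset.univ.filter fun j => z j = v)
              ⊆ (Finset.univ.filter fun j => fAngle (s i) (z j) = fAngle (s i) v) := by
            intro j hj
            simp only [Finset.mem_filter, Finset.mem_univ, true_and] at hj ⊢
            rw [hj]
          have hne : ((Finset.univ.filter fun j => fAngle (s i) (z j) = fAngle (s i) v)
              \ (Finset.univ.filter fun j => z j = v)).Nonempty := by
            rw [← Finset.card_pos, Finset.card_sdiff_of_subset hsub]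
            omega
          obtain ⟨j, hj⟩ := hne
          rw [Finset.mem_sdiff, Finset.mem_filter, Finset.mem_filter] at hj
          exact ⟨j, hj.1.2, fun hzv => hj.2 ⟨Finset.mem_univ j, hzv⟩⟩
        choose g hg1 hg2 using hex
        have hginj : Function.Injective g := by
          intro i i' hii
          by_contra hne
          have hne' : s i ≠ s i' := fun e => hne (hs e)
          have := angle_forces (hneg i) (hneg i') hne' (z (g i)) v (hg1 i)
            (by rw [hii]; exact hg1 i')
          exact hg2 i this
        have hcard := Fintype.card_le_of_injective g hginj
        simp only [Fintype.card_fin] at hcard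
        omega
      obtain ⟨i₀, hi₀⟩ := hB x
      obtain ⟨i₁, hi₁⟩ := hB y
      have c1 := hA x i₁
      have c2 := hA y i₀
      have e1 := hang i₀ (fAngle (s i₀) v)
      have e2 := hang i₁ (fAngle (s i₁) v)
      omega
    have hcard : ∀ v : D1, Fintype.card {j // x j = v} = Fintype.card {j // y j = v} := by
      intro v
      rw [Fintype.card_subtype, Fintype.card_subtype]
      exact hcnt v
    let F : ∀ v : D1, {j // x j = v} ≃ {j // y j = v} :=
      fun v => Fintype.equivOfCardEq (hcard v)
    refine ⟨(Equiv.sigmaFiberEquiv x).symm.trans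
      ((Equiv.sigmaCongrRight F).trans (Equiv.sigmaFiberEquiv y)), ?_⟩
    funext j
    simp only [Function.comp_apply, Equiv.trans_apply, Equiv.sigmaCongrRight_apply]
    have hstep : (Equiv.sigmaFiberEquiv x).symm j = ⟨x j, ⟨j, rfl⟩⟩ := rfl
    rw [hstep]
    exact ((F (x j) ⟨j, rfl⟩).2).symm
  · -- continuity
    intro x hx ε hε
    set C : ℝ := Finset.univ.sup' Finset.univ_nonempty
      (fun i : Fin (N + 1) => max (2 * (L - s i) / (s i) ^ 2) (4 / (-(s i)))) with hCdef
    have hC0 : 0 ≤ C := by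
      have h1 := Finset.le_sup' (s := Finset.univ)
        (fun i : Fin (N + 1) => max (2 * (L - s i) / (s i) ^ 2) (4 / (-(s i))))
        (Finset.mem_univ (0 : Fin (N + 1)))
      have h2 : (0:ℝ) ≤ 4 / (-(s 0)) := by
        have h0 := hneg 0
        have h0' : (0:ℝ) < -(s 0) := by linarith
        exact le_of_lt (div_pos (by norm_num) h0')
      exact le_trans (le_trans h2 (le_max_right _ _)) h1
    have hδpos : 0 < ε / (2 * (C + 1)) := by positivity
    refine ⟨ε / (2 * (C + 1)), hδpos, ?_⟩
    intro y hy hdn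
    rw [dBn, Finset.inf'_lt_iff] at hdn
    obtain ⟨ψ, -, hψ⟩ := hdn
    rw [dBmax, Finset.fold_max_lt] at hψ
    have hco : ∀ j, dB (x j) (y (ψ j)) < ε / (2 * (C + 1)) :=
      fun j => hψ.2 j (Finset.mem_univ j)
    intro i j
    have key : ∀ k, |(fAngle (s i) ∘ x) k - (fAngle (s i) ∘ y) (ψ k)|
        ≤ C * (ε / (2 * (C + 1))) := by
      intro k
      have h1 := angle_dB L (s i) (hneg i) (x k) (y (ψ k)) (hx k) (hy (ψ k))
      have h2 : max (2 * (L - s i) / (s i) ^ 2) (4 / (-(s i))) ≤ C := by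
        rw [hCdef]
        exact Finset.le_sup'
          (fun i : Fin (N + 1) => max (2 * (L - s i) / (s i) ^ 2) (4 / (-(s i))))
          (Finset.mem_univ i)
      have h3 := dB_nonneg (x k) (y (ψ k))
      have h4 := hco k
      calc |(fAngle (s i) ∘ x) k - (fAngle (s i) ∘ y) (ψ k)|
          ≤ max (2 * (L - s i) / (s i) ^ 2) (4 / (-(s i))) * dB (x k) (y (ψ k)) := h1
        _ ≤ C * (ε / (2 * (C + 1))) := mul_le_mul h2 h4.le h3 hC0
    have hsorted := sorted_abs_le (fAngle (s i) ∘ x) (fAngle (s i) ∘ y) ψ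
      (C * (ε / (2 * (C + 1)))) key j
    have hfin : C * (ε / (2 * (C + 1))) < ε := by
      have h2 : (0:ℝ) < 2 * (C + 1) := by linarith
      have hq : 0 < ε / (2 * (C + 1)) := by positivity
      have hqe : (ε / (2 * (C + 1))) * (2 * (C + 1)) = ε := div_mul_cancel₀ _ h2.ne'
      nlinarith [mul_nonneg hC0 hq.le]
    exact lt_of_le_of_lt hsorted hfin
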